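/- Consider a perturbed discrete-time stochastic control system. Suppose there exist a barrier certificate candidate B : ℝⁿ → ℝ and a constant ε ∈ [0,1] such that: (i) B(s) ≥ 0 for all s ∈ S; (ii) B(s) ≤ ε for all s ∈ S₀; (iii) B(s) ≥ 1 for all s ∈ S_u; and (iv) ∫ B(g(s,δ)) dμ(δ) − B(s) ≤ 0 for all s ∈ S \ S_u. Then for every initial state s₀ ∈ S₀, the safety probability over the infinite time horizon is bounded below: ℙ_{s₀}[ traj(s₀,ω)(t) ∉ S_u for all t ∈ ℕ ] ≥ 1 − B(s₀). -/

import Mathlib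

open MeasureTheory

/-- Trajectory of a perturbed discrete-time control system. -/
def traj {n : ℕ} (g : (Fin n → ℝ) → (Fin n → ℝ) → (Fin n → ℝ))
    (s₀ : Fin n → ℝ) (ω : ℕ → Fin n → ℝ) : ℕ → Fin n → ℝ
  | 0 => s₀
  | t + 1 => g (traj g s₀ ω t) (ω t)

section Aux

variable {n : ℕ} (g : (Fin n → ℝ) → (Fin n → ℝ) → (Fin n → ℝ))

lemma traj_congr (s : Fin n → ℝ) {ω ω' : ℕ → Fin n → ℝ} :
    ∀ t : ℕ, (∀ k < t, ω k = ω' k) → traj g s ω t = traj g s ω' t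
  | 0, _ => rfl
  | t + 1, h => by
      simp only [traj]
      rw [traj_congr s t (fun k hk => h k (hk.trans (Nat.lt_succ_self t))),
        h t (Nat.lt_succ_self t)]

lemma traj_shift (s : Fin n → ℝ) (ω : ℕ → Fin n → ℝ) :
    ∀ t : ℕ, traj g s ω (t + 1) = traj g (g s (ω 0)) (fun k => ω (k + 1)) t
  | 0 => rfl
  | t + 1 => by
      show g (traj g s ω (t + 1)) (ω (t + 1)) = _
      rw [traj_shift s ω t]; rfl

lemma traj_measurable (hg : Measurable (Function.uncurry g)) :
    ∀ t : ℕ, Measurable (fun q : (Fin n → ℝ) × (ℕ → Fin n → ℝ) => traj g q.1 q.2 t)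
  | 0 => measurable_fst
  | t + 1 => by
      have : (fun q : (Fin n → ℝ) × (ℕ → Fin n → ℝ) => traj g q.1 q.2 (t + 1))
          = fun q => Function.uncurry g (traj g q.1 q.2 t, q.2 t) := rfl
      rw [this]
      exact hg.comp ((traj_measurable hg t).prodMk
        ((measurable_pi_apply t).comp measurable_snd))

/-- Pad a finite noise vector to an infinite noise sequence (by zeros). -/
def pad (T : ℕ) (v : Fin T → Fin n → ℝ) : ℕ → Fin n → ℝ :=
  fun k => if h : k < T then v ⟨k, h⟩ else 0

lemma pad_measurable (T : ℕ) : Measurable (pad (n := n) T) := by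
  apply measurable_pi_lambda
  intro k
  by_cases h : k < T
  · simp only [pad, dif_pos h]; exact measurable_pi_apply _
  · simp only [pad, dif_neg h]; exact measurable_const

open Classical in
/-- `phi T s` : probability of reaching `Su` within `T` steps from `s`. -/
noncomputable def phi (Su : Set (Fin n → ℝ)) (μ : Measure (Fin n → ℝ)) :
    ℕ → (Fin n → ℝ) → ENNReal
  | 0 => fun _ => 0
  | T + 1 => fun s => if s ∈ Su then 1 else ∫⁻ δ, phi Su μ T (g s δ) ∂μ

lemma phi_measurable {Su : Set (Fin n → ℝ)} {μ : Measure (Fin n → ℝ)} [SFinite μ]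
    (hg : Measurable (Function.uncurry g)) (hSu : MeasurableSet Su) :
    ∀ T : ℕ, Measurable (phi g Su μ T)
  | 0 => measurable_const
  | T + 1 => by
      refine Measurable.ite hSu measurable_const ?_
      exact Measurable.lintegral_prod_right ((phi_measurable hg hSu T).comp hg)

end Aux

/-- Lower bound on probabilistic safety over the infinite time horizon. -/
theorem lower_bound_infinite_horizon_safety
    {n : ℕ} (S S₀ Su W : Set (Fin n → ℝ))
    (g : (Fin n → ℝ) → (Fin n → ℝ) → (Fin n → ℝ))
    (μ : Measure (Fin n → ℝ)) [IsProbabilityMeasure μ]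
    (hS : MeasurableSet S) (hS₀ : MeasurableSet S₀) (hSu : MeasurableSet Su)
    (hS₀S : S₀ ⊆ S) (hSuS : Su ⊆ S) (hdisj : S₀ ∩ Su = ∅)
    (hg : Measurable (Function.uncurry g))
    -- `W` is the support of the noise distribution `μ`
    (hW : W = {δ | ∀ U : Set (Fin n → ℝ), IsOpen U → δ ∈ U → 0 < μ U})
    (hgS : ∀ s ∈ S, ∀ δ ∈ W, g s δ ∈ S)
    -- `P` is the countable product measure `μ^⊗ℕ` on noise sequences,
    -- characterized by its values on finite cylinders
    (P : Measure (ℕ → Fin n → ℝ)) [IsProbabilityMeasure P]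
    (hP : ∀ (T : ℕ) (A : Fin T → Set (Fin n → ℝ)), (∀ i, MeasurableSet (A i)) →
      P {ω | ∀ i : Fin T, ω (i : ℕ) ∈ A i} = ∏ i, μ (A i))
    -- the barrier certificate candidate: a bounded Borel-measurable function
    (B : (Fin n → ℝ) → ℝ) (hBmeas : Measurable B) (hBbdd : ∃ C, ∀ s, |B s| ≤ C)
    (ε : ℝ) (hε : ε ∈ Set.Icc (0 : ℝ) 1)
    (hnonneg : ∀ s ∈ S, 0 ≤ B s)
    (hinit : ∀ s ∈ S₀, B s ≤ ε)
    (hunsafe : ∀ s ∈ Su, 1 ≤ B s)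
    (hdec : ∀ s ∈ S \ Su, ∫ δ, B (g s δ) ∂μ - B s ≤ 0) :
    ∀ s₀ ∈ S₀,
      1 - B s₀ ≤ (P {ω | ∀ t : ℕ, traj g s₀ ω t ∉ Su}).toReal := by
  classical
  intro s₀ hs₀
  have hs₀S : s₀ ∈ S := hS₀S hs₀
  obtain ⟨C, hC⟩ := hBbdd
  -- a.e. δ ∈ W
  have hWnull : μ Wᶜ = 0 := by
    have hsub : Wᶜ ⊆ ⋃₀ {U : Set (Fin n → ℝ) | IsOpen U ∧ μ U = 0} := by
      intro δ hδ
      rw [hW] at hδ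
      simp only [Set.mem_compl_iff, Set.mem_setOf_eq, not_forall] at hδ
      obtain ⟨U, hU, hδU, hμU⟩ := hδ
      exact ⟨U, ⟨hU, by simpa using hμU⟩, hδU⟩
    obtain ⟨T', hT'count, hT'sub, hT'eq⟩ :=
      TopologicalSpace.isOpen_sUnion_countable
        {U : Set (Fin n → ℝ) | IsOpen U ∧ μ U = 0} (fun U hU => hU.1)
    refine measure_mono_null hsub ?_
    rw [← hT'eq]
    exact (measure_sUnion_null_iff hT'count).2 fun U hU => (hT'sub hU).2
  have haeW : ∀ᵐ δ ∂μ, δ ∈ W := by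
    rw [ae_iff]
    exact hWnull
  -- phi ≤ ofReal ∘ B on S
  have hphiB : ∀ T : ℕ, ∀ s ∈ S, phi g Su μ T s ≤ ENNReal.ofReal (B s) := by
    intro T
    induction T with
    | zero => intro s _; simp [phi]
    | succ T ih =>
        intro s hs
        by_cases hsu : s ∈ Su
        · simp only [phi, if_pos hsu]
          rw [show (1 : ENNReal) = ENNReal.ofReal 1 by simp]
          exact ENNReal.ofReal_le_ofReal (hunsafe s hsu)
        · simp only [phi, if_neg hsu]
          have hint : Integrable (fun δ => B (g s δ)) μ := by
            refine Integrable.mono' (integrable_const C)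
              ((hBmeas.comp (hg.comp (measurable_const.prodMk
                measurable_id))).aestronglyMeasurable) ?_
            exact ae_of_all _ fun δ => hC _
          have hae0 : 0 ≤ᵐ[μ] fun δ => B (g s δ) := by
            filter_upwards [haeW] with δ hδ
            exact hnonneg _ (hgS s hs δ hδ)
          calc ∫⁻ δ, phi g Su μ T (g s δ) ∂μ
              ≤ ∫⁻ δ, ENNReal.ofReal (B (g s δ)) ∂μ := by
                refine lintegral_mono_ae ?_
                filter_upwards [haeW] with δ hδ
                exact ih _ (hgS s hs δ hδ)
            _ = ENNReal.ofReal (∫ δ, B (g s δ) ∂μ) :=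
                (ofReal_integral_eq_lintegral_ofReal hint hae0).symm
            _ ≤ ENNReal.ofReal (B s) := by
                refine ENNReal.ofReal_le_ofReal ?_
                have := hdec s ⟨hs, hsu⟩
                linarith
  -- measurability of finite-horizon reach sets
  have htrajmeas : ∀ (s : Fin n → ℝ) (t : ℕ),
      Measurable (fun ω : ℕ → Fin n → ℝ => traj g s ω t) := by
    intro s t
    exact (traj_measurable g hg t).comp (measurable_const.prodMk measurable_id)
  have hGmeas : ∀ (T : ℕ) (s : Fin n → ℝ),
      MeasurableSet {v : Fin T → Fin n → ℝ | ∃ t < T, traj g s (pad T v) t ∈ Su} := by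
    intro T s
    have : {v : Fin T → Fin n → ℝ | ∃ t < T, traj g s (pad T v) t ∈ Su}
        = ⋃ t, ⋃ _ : t < T, (fun v => traj g s (pad T v) t) ⁻¹' Su := by
      ext v; simp [Set.mem_iUnion]
    rw [this]
    exact MeasurableSet.iUnion fun t => MeasurableSet.iUnion fun _ =>
      ((htrajmeas s t).comp (pad_measurable T)) hSu
  -- key induction: pi-measure of reach set bounded by phi
  have hkey : ∀ T : ℕ, ∀ s ∈ S,
      Measure.pi (fun _ : Fin T => μ)
        {v : Fin T → Fin n → ℝ | ∃ t < T, traj g s (pad T v) t ∈ Su}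
      ≤ phi g Su μ T s := by
    intro T
    induction T with
    | zero =>
        intro s _
        have : {v : Fin 0 → Fin n → ℝ | ∃ t < 0, traj g s (pad 0 v) t ∈ Su} = ∅ := by
          ext v; simp
        rw [this]
        simp [phi]
    | succ T ih =>
        intro s hs
        set e := MeasurableEquiv.piFinSuccAbove (fun _ : Fin (T + 1) => (Fin n → ℝ)) 0
        have hmp := measurePreserving_piFinSuccAbove (fun _ : Fin (T + 1) => μ) 0
        set A : Set ((Fin n → ℝ) × (Fin T → Fin n → ℝ)) :=
          {p | s ∈ Su ∨ ∃ t < T, traj g (g s p.1) (pad T p.2) t ∈ Su} with hA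
        have hAmeas : MeasurableSet A := by
          by_cases hsu : s ∈ Su
          · have : A = Set.univ := by ext p; simp [hA, hsu]
            rw [this]; exact MeasurableSet.univ
          · have : A = {p : (Fin n → ℝ) × (Fin T → Fin n → ℝ) |
                ∃ t < T, traj g (g s p.1) (pad T p.2) t ∈ Su} := by
              ext p; simp [hA, hsu]
            rw [this]
            have : {p : (Fin n → ℝ) × (Fin T → Fin n → ℝ) |
                ∃ t < T, traj g (g s p.1) (pad T p.2) t ∈ Su}
                = ⋃ t, ⋃ _ : t < T,
                    (fun p : (Fin n → ℝ) × (Fin T → Fin n → ℝ) =>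
                      traj g (g s p.1) (pad T p.2) t) ⁻¹' Su := by
              ext p; simp [Set.mem_iUnion]
            rw [this]
            refine MeasurableSet.iUnion fun t => MeasurableSet.iUnion fun _ => ?_
            have hm : Measurable (fun p : (Fin n → ℝ) × (Fin T → Fin n → ℝ) =>
                traj g (g s p.1) (pad T p.2) t) :=
              (traj_measurable g hg t).comp
                (((hg.comp ((measurable_const.prodMk measurable_fst)))).prodMk
                  ((pad_measurable T).comp measurable_snd))
            exact hm hSu
        -- the reach set is the preimage of A under e
        have hpre : {v : Fin (T + 1) → Fin n → ℝ |
            ∃ t < T + 1, traj g s (pad (T + 1) v) t ∈ Su} = e ⁻¹' A := by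
          ext v
          have he : e v = (v 0, fun j : Fin T => v (Fin.succ j)) := rfl
          simp only [Set.mem_preimage, he, hA, Set.mem_setOf_eq]
          constructor
          · rintro ⟨t, ht, htin⟩
            match t with
            | 0 => exact Or.inl htin
            | r + 1 =>
                right
                refine ⟨r, Nat.lt_of_succ_lt_succ ht, ?_⟩
                rw [traj_shift] at htin
                have h0 : pad (T + 1) v 0 = v 0 := by
                  simp [pad, Nat.succ_pos]
                rw [h0] at htin
                have := traj_congr g (g s (v 0)) (ω := fun k => pad (T + 1) v (k + 1))
                  (ω' := pad T fun j : Fin T => v (Fin.succ j)) r ?_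
                · rw [← this]; exact htin
                · intro k hk
                  have hkT : k < T := hk.trans (Nat.lt_of_succ_lt_succ ht)
                  have hkT1 : k + 1 < T + 1 := Nat.succ_lt_succ hkT
                  simp only [pad, dif_pos hkT1, dif_pos hkT]
                  congr 1
          · rintro (hsu | ⟨r, hr, hrin⟩)
            · exact ⟨0, Nat.succ_pos T, hsu⟩
            · refine ⟨r + 1, Nat.succ_lt_succ hr, ?_⟩
              rw [traj_shift]
              have h0 : pad (T + 1) v 0 = v 0 := by simp [pad, Nat.succ_pos]
              rw [h0]
              have := traj_congr g (g s (v 0)) (ω := fun k => pad (T + 1) v (k + 1))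
                (ω' := pad T fun j : Fin T => v (Fin.succ j)) r ?_
              · rw [this]; exact hrin
              · intro k hk
                have hkT : k < T := hk.trans hr
                have hkT1 : k + 1 < T + 1 := Nat.succ_lt_succ hkT
                simp only [pad, dif_pos hkT1, dif_pos hkT]
                congr 1
        rw [hpre, hmp.measure_preimage hAmeas.nullMeasurableSet]
        by_cases hsu : s ∈ Su
        · have : A = Set.univ := by ext p; simp [hA, hsu]
          rw [this]
          simp only [phi, if_pos hsu]
          exact le_of_eq measure_univ
        · have hAeq : A = {p : (Fin n → ℝ) × (Fin T → Fin n → ℝ) |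
              ∃ t < T, traj g (g s p.1) (pad T p.2) t ∈ Su} := by
            ext p; simp [hA, hsu]
          rw [hAeq, Measure.prod_apply (by rw [← hAeq] at *; exact (by rwa [hAeq] at hAmeas))]
          simp only [phi, if_neg hsu]
          refine lintegral_mono_ae ?_
          filter_upwards [haeW] with x hx
          have : (Prod.mk x ⁻¹' {p : (Fin n → ℝ) × (Fin T → Fin n → ℝ) |
              ∃ t < T, traj g (g s p.1) (pad T p.2) t ∈ Su})
              = {w : Fin T → Fin n → ℝ | ∃ t < T, traj g (g s x) (pad T w) t ∈ Su} := rfl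
          rw [this]
          exact ih (g s x) (hgS s hs x hx)
  -- pushforward of P to finite horizons equals the finite product measure
  have hmap : ∀ T : ℕ,
      P.map (fun ω : ℕ → Fin n → ℝ => fun i : Fin T => ω (i : ℕ))
        = Measure.pi (fun _ : Fin T => μ) := by
    intro T
    have hprojmeas : Measurable (fun ω : ℕ → Fin n → ℝ => fun i : Fin T => ω (i : ℕ)) :=
      measurable_pi_lambda _ fun i => measurable_pi_apply _
    refine (Measure.pi_eq fun A hA => ?_).symm
    rw [Measure.map_apply hprojmeas (MeasurableSet.univ_pi hA)]
    have : (fun ω : ℕ → Fin n → ℝ => fun i : Fin T => ω (i : ℕ)) ⁻¹' Set.pi Set.univ A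
        = {ω : ℕ → Fin n → ℝ | ∀ i : Fin T, ω (i : ℕ) ∈ A i} := by
      ext ω; simp [Set.mem_pi]
    rw [this, hP T A hA]
  -- finite horizon bound for P
  have hfin : ∀ T : ℕ,
      P {ω : ℕ → Fin n → ℝ | ∃ t < T, traj g s₀ ω t ∈ Su} ≤ ENNReal.ofReal (B s₀) := by
    intro T
    have hprojmeas : Measurable (fun ω : ℕ → Fin n → ℝ => fun i : Fin T => ω (i : ℕ)) :=
      measurable_pi_lambda _ fun i => measurable_pi_apply _
    have hEeq : {ω : ℕ → Fin n → ℝ | ∃ t < T, traj g s₀ ω t ∈ Su}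
        = (fun ω : ℕ → Fin n → ℝ => fun i : Fin T => ω (i : ℕ)) ⁻¹'
            {v : Fin T → Fin n → ℝ | ∃ t < T, traj g s₀ (pad T v) t ∈ Su} := by
      ext ω
      simp only [Set.mem_preimage, Set.mem_setOf_eq]
      constructor
      · rintro ⟨t, ht, htin⟩
        refine ⟨t, ht, ?_⟩
        rw [traj_congr g s₀ t (ω' := ω)]
        · exact htin
        · intro k hk
          have : k < T := hk.trans ht
          simp [pad, this]
      · rintro ⟨t, ht, htin⟩
        refine ⟨t, ht, ?_⟩
        rw [traj_congr g s₀ t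
          (ω' := pad T (fun i : Fin T => ω (i : ℕ)))]
        · exact htin
        · intro k hk
          have : k < T := hk.trans ht
          simp [pad, this]
    rw [hEeq, ← Measure.map_apply hprojmeas (hGmeas T s₀), hmap T]
    exact (hkey T s₀ hs₀S).trans (hphiB T s₀ hs₀S)
  -- pass to the infinite horizon
  set E : ℕ → Set (ℕ → Fin n → ℝ) :=
    fun T => {ω | ∃ t < T, traj g s₀ ω t ∈ Su} with hE
  have hEmeas : ∀ T, MeasurableSet (E T) := by
    intro T
    have : E T = ⋃ t, ⋃ _ : t < T, (fun ω => traj g s₀ ω t) ⁻¹' Su := by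
      ext ω; simp [hE, Set.mem_iUnion]
    rw [this]
    exact MeasurableSet.iUnion fun t => MeasurableSet.iUnion fun _ =>
      (htrajmeas s₀ t) hSu
  have hEmono : Monotone E := by
    intro a b hab ω
    rintro ⟨t, ht, htin⟩
    exact ⟨t, ht.trans_le hab, htin⟩
  have hunion : (⋃ T, E T) = {ω : ℕ → Fin n → ℝ | ∃ t, traj g s₀ ω t ∈ Su} := by
    ext ω
    simp only [Set.mem_iUnion, hE, Set.mem_setOf_eq]
    constructor
    · rintro ⟨T, t, _, h⟩; exact ⟨t, h⟩
    · rintro ⟨t, h⟩; exact ⟨t + 1, t, Nat.lt_succ_self t, h⟩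
  have hUbound : P (⋃ T, E T) ≤ ENNReal.ofReal (B s₀) := by
    rw [hEmono.directed_le.measure_iUnion]
    exact iSup_le hfin
  have hcomp : {ω : ℕ → Fin n → ℝ | ∀ t : ℕ, traj g s₀ ω t ∉ Su} = (⋃ T, E T)ᶜ := by
    rw [hunion]
    ext ω; simp
  have hUmeas : MeasurableSet (⋃ T, E T) := MeasurableSet.iUnion hEmeas
  rw [hcomp, measure_compl hUmeas (measure_ne_top P _), measure_univ]
  have hle1 : P (⋃ T, E T) ≤ 1 := prob_le_one
  rw [ENNReal.toReal_sub_of_le hle1 ENNReal.one_ne_top]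
  have : (P (⋃ T, E T)).toReal ≤ B s₀ :=
    ENNReal.toReal_le_of_le_ofReal (hnonneg s₀ hs₀S) hUbound
  simpa using sub_le_sub_left this 1
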